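/- For all α, β ∈ h and all m, n ∈ ℤ_+, the g-function is symmetric: g(α, m, β, n, x) = g(β, n, α, m, x). (Note that since ν is an isometry of h, one has ⟨β_(r), α⟩ = ⟨α_(−r), β⟩ = ⟨α_(p−r), β⟩ for all r; the asserted symmetry is nontrivial because, by the binomial expansion convention, (x_0−x_2)^{−2} ≠ (x_2−x_0)^{−2}.) -/

import Mathlib

noncomputable section

open scoped BigOperators

/-- Generalized binomial coefficient `z(z-1)⋯(z-k+1)/k!`. -/
def cbinom (z : ℂ) (k : ℕ) : ℂ :=
  (∏ j ∈ Finset.range k, (z - (j : ℂ))) / (k.factorial : ℂ)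

/-- Generalized binomial coefficient with integer lower index (zero for negative index). -/
def cbinomZ (z : ℂ) (k : ℤ) : ℂ := if 0 ≤ k then cbinom z k.toNat else 0

/-- The Heisenberg setting: a `d`-dimensional abelian Lie algebra `H` over `ℂ` (encoded
by an orthonormal spanning family `bas : Fin d → H`) with a nondegenerate symmetric
bilinear form `bil`, an isometry `nu` of period `p`, a primitive `p`-th root of unity
`ωp`, and the eigenspace projections `proj r : H → H_(r)` onto the `ωₚ^r`-eigenspaces of
`nu` (so that `proj` is `p`-periodic, the projections sum to the identity, and `nu` acts
as `ωₚ^r` on the range of `proj r`). -/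
structure HeisForm (p : ℕ) (H : Type) [AddCommGroup H] [Module ℂ H] where
  bil : H →ₗ[ℂ] H →ₗ[ℂ] ℂ
  bil_symm : ∀ α β : H, bil α β = bil β α
  bil_nondeg : ∀ α : H, (∀ β : H, bil α β = 0) → α = 0
  nu : H ≃ₗ[ℂ] H
  isom : ∀ α β : H, bil (nu α) (nu β) = bil α β
  period : nu ^ p = 1
  ωp : ℂ
  prim : IsPrimitiveRoot ωp p
  proj : ℤ → H →ₗ[ℂ] H
  proj_per : ∀ r : ℤ, proj (r + p) = proj r
  proj_sum : ∀ α : H, ∑ r ∈ Finset.range p, proj (r : ℤ) α = α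
  proj_eig : ∀ (r : ℤ) (α : H), nu (proj r α) = ωp ^ r • proj r α
  d : ℕ
  bas : Fin d → H
  bas_ortho : ∀ q q' : Fin d, bil (bas q) (bas q') = if q = q' then 1 else 0
  bas_span : Submodule.span ℂ (Set.range bas) = ⊤

variable {H : Type} [AddCommGroup H] [Module ℂ H]

/-- The coefficient of `x₀^a x₂^b x^c` in the formal series
`((x+x₂)/(x+x₀))^s (1 - s + s (x+x₀)/(x+x₂)) (x₀-x₂)^{-2}`,
where `(x+x₂)^s` (resp. `(x+x₀)^{-s}`, etc.) is expanded in nonnegative integral powers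
of `x₂` (resp. `x₀`), and `(x₀-x₂)^{-2}` in nonnegative integral powers of `x₂`. -/
def EEsum (s : ℂ) (a b : ℤ) : ℂ :=
  ∑ᶠ l : ℕ, ((l : ℂ) + 1) *
    ((1 - s) * cbinomZ s (b - l) * cbinomZ (-s) (a + 2 + l)
      + s * cbinomZ (s - 1) (b - l) * cbinomZ (1 - s) (a + 2 + l))

/-- The coefficient of `x₀^a x₂^b x^c` in
`((x+x₂)/(x+x₀))^s (1 - s + s (x+x₀)/(x+x₂)) (x₀-x₂)^{-2}`. -/
def EE (s : ℂ) (a b c : ℤ) : ℂ := if c = -(a + b + 2) then EEsum s a b else 0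

/-- The coefficient of `x₀^a x₂^b x^c` in the formal series
`∑_{r=1}^{p} ((x+x₂)/(x+x₀))^{r/p} (1 - r/p + (r/p)(x+x₀)/(x+x₂)) (x₀-x₂)^{-2} ⟨α_(r),β⟩`
appearing in the definition of the `g`-function. -/
def gCoeff (p : ℕ) (Hs : HeisForm p H) (α β : H) (a b c : ℤ) : ℂ :=
  if c = -(a + b + 2) then
    ∑ r ∈ Finset.Icc 1 p, Hs.bil (Hs.proj (r : ℤ) α) β * EEsum ((r : ℂ) / (p : ℂ)) a b
  else 0

/-- `g(α,m,β,n,x) = Res_{x₀} Res_{x₂} x₀^{-m} x₂^{-n} ∑_{r=1}^{p} (⋯)`: the residues pick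
the coefficients `a = m-1`, `b = n-1`, and the resulting series in `x` is the monomial
`gval ⋅ x^{-m-n}`. -/
def gval (p : ℕ) (Hs : HeisForm p H) (α : H) (m : ℤ) (β : H) (n : ℤ) : ℂ :=
  gCoeff p Hs α β (m - 1) (n - 1) (-(m + n))

lemma cbinom_zero (z : ℂ) : cbinom z 0 = 1 := by simp [cbinom]

lemma cbinom_succ_left (z : ℂ) (k : ℕ) :
    ((k : ℂ) + 1) * cbinom z (k + 1) = z * cbinom (z - 1) k := by
  have hf : ((k.factorial : ℕ) : ℂ) ≠ 0 := Nat.cast_ne_zero.2 k.factorial_ne_zero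
  have hk : ((k : ℂ) + 1) ≠ 0 := Nat.cast_add_one_ne_zero k
  have hprod : ∏ j ∈ Finset.range (k + 1), (z - (j : ℂ))
      = z * ∏ j ∈ Finset.range k, ((z - 1) - (j : ℂ)) := by
    rw [Finset.prod_range_succ']
    simp only [Nat.cast_zero, sub_zero]
    rw [mul_comm]
    congr 1
    refine Finset.prod_congr rfl fun j _ => ?_
    push_cast
    ring
  simp only [cbinom, Nat.factorial_succ, hprod]
  push_cast
  field_simp

lemma cbinom_zero_succ (k : ℕ) : cbinom 0 (k + 1) = 0 := by
  have h := cbinom_succ_left 0 k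
  have hk : ((k : ℂ) + 1) ≠ 0 := Nat.cast_add_one_ne_zero k
  rw [zero_mul] at h
  exact (mul_eq_zero.1 h).resolve_left hk

lemma cbinom_vandermonde (N : ℕ) : ∀ x y : ℂ,
    ∑ k ∈ Finset.range (N + 1), cbinom x k * cbinom y (N - k) = cbinom (x + y) N := by
  induction N with
  | zero => intro x y; simp [cbinom_zero]
  | succ N ih =>
    intro x y
    have hN : ((N : ℂ) + 1) ≠ 0 := Nat.cast_add_one_ne_zero N
    apply mul_left_cancel₀ hN
    have split : ∀ k ∈ Finset.range (N + 2),
        ((N : ℂ) + 1) * (cbinom x k * cbinom y (N + 1 - k))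
          = (k : ℂ) * (cbinom x k * cbinom y (N + 1 - k))
            + ((N + 1 - k : ℕ) : ℂ) * (cbinom x k * cbinom y (N + 1 - k)) := by
      intro k hk
      have hk' : k ≤ N + 1 := Nat.lt_succ_iff.1 (Finset.mem_range.1 hk)
      have hc : ((N + 1 - k : ℕ) : ℂ) = (N : ℂ) + 1 - k := by
        push_cast [Nat.cast_sub hk']; ring
      rw [hc]; ring
    rw [Finset.mul_sum, Finset.sum_congr rfl split, Finset.sum_add_distrib]
    have h1 : ∑ k ∈ Finset.range (N + 2), (k : ℂ) * (cbinom x k * cbinom y (N + 1 - k))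
        = x * cbinom (x - 1 + y) N := by
      rw [Finset.sum_range_succ']
      simp only [Nat.cast_zero, zero_mul, add_zero]
      rw [← ih (x - 1) y, Finset.mul_sum]
      refine Finset.sum_congr rfl fun k _ => ?_
      have hidx : N + 1 - (k + 1) = N - k := by omega
      rw [hidx]
      have h := cbinom_succ_left x k
      push_cast
      calc ((k : ℂ) + 1) * (cbinom x (k + 1) * cbinom y (N - k))
          = (((k : ℂ) + 1) * cbinom x (k + 1)) * cbinom y (N - k) := by ring
        _ = (x * cbinom (x - 1) k) * cbinom y (N - k) := by rw [h]
        _ = x * (cbinom (x - 1) k * cbinom y (N - k)) := by ring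
    have h2 : ∑ k ∈ Finset.range (N + 2), ((N + 1 - k : ℕ) : ℂ) * (cbinom x k * cbinom y (N + 1 - k))
        = y * cbinom (x + (y - 1)) N := by
      rw [Finset.sum_range_succ]
      simp only [Nat.sub_self, Nat.cast_zero, zero_mul, add_zero]
      rw [← ih x (y - 1), Finset.mul_sum]
      refine Finset.sum_congr rfl fun k hk => ?_
      have hk' : k ≤ N := Nat.lt_succ_iff.1 (Finset.mem_range.1 hk)
      have hidx : N + 1 - k = (N - k) + 1 := by omega
      rw [hidx]
      have h := cbinom_succ_left y (N - k)
      have hc : ((N - k + 1 : ℕ) : ℂ) = ((N - k : ℕ) : ℂ) + 1 := by push_cast; ring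
      rw [hc]
      calc (((N - k : ℕ) : ℂ) + 1) * (cbinom x k * cbinom y ((N - k) + 1))
          = (((N - k : ℕ) : ℂ) + 1) * cbinom y ((N - k) + 1) * cbinom x k := by push_cast; ring
        _ = y * cbinom (y - 1) (N - k) * cbinom x k := by rw [h]
        _ = y * (cbinom x k * cbinom (y - 1) (N - k)) := by ring
    rw [h1, h2]
    have h3 := cbinom_succ_left (x + y) N
    have e1 : x - 1 + y = x + y - 1 := by ring
    have e2 : x + (y - 1) = x + y - 1 := by ring
    rw [e1, e2, h3]
    ring

lemma cbinom_vandermonde_wt (x y : ℂ) (N : ℕ) :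
    ∑ k ∈ Finset.range (N + 2), ((N : ℂ) + 1 - k) * (cbinom x k * cbinom y (N + 1 - k))
      = y * cbinom (x + y - 1) N := by
  rw [Finset.sum_range_succ]
  have hz : ((N : ℂ) + 1 - ((N + 1 : ℕ) : ℂ)) = 0 := by push_cast; ring
  rw [hz, zero_mul, add_zero]
  have e2 : x + y - 1 = x + (y - 1) := by ring
  rw [e2, ← cbinom_vandermonde N x (y - 1), Finset.mul_sum]
  refine Finset.sum_congr rfl fun k hk => ?_
  have hk' : k ≤ N := Nat.lt_succ_iff.1 (Finset.mem_range.1 hk)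
  have hidx : N + 1 - k = (N - k) + 1 := by omega
  have hc : ((N : ℂ) + 1 - k) = ((N - k : ℕ) : ℂ) + 1 := by
    push_cast [Nat.cast_sub hk']; ring
  rw [hidx, hc]
  have h := cbinom_succ_left y (N - k)
  calc (((N - k : ℕ) : ℂ) + 1) * (cbinom x k * cbinom y ((N - k) + 1))
      = (((N - k : ℕ) : ℂ) + 1) * cbinom y ((N - k) + 1) * cbinom x k := by ring
    _ = y * cbinom (y - 1) (N - k) * cbinom x k := by rw [h]
    _ = y * (cbinom x k * cbinom (y - 1) (N - k)) := by ring

lemma cbinomZ_coe (z : ℂ) (k : ℕ) : cbinomZ z (k : ℤ) = cbinom z k := by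
  simp [cbinomZ]

lemma cbinomZ_neg (z : ℂ) {k : ℤ} (h : k < 0) : cbinomZ z k = 0 := by
  simp [cbinomZ, not_le.2 h]

lemma EEsum_eq (s : ℂ) (M K : ℕ) : EEsum s (M : ℤ) (K : ℤ)
    = ∑ l ∈ Finset.range (K + 1), ((l : ℂ) + 1) *
        ((1 - s) * cbinom s (K - l) * cbinom (-s) (M + 2 + l)
          + s * cbinom (s - 1) (K - l) * cbinom (1 - s) (M + 2 + l)) := by
  rw [EEsum]
  rw [finsum_eq_sum_of_support_subset _ (s := Finset.range (K + 1)) ?_]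
  · refine Finset.sum_congr rfl fun l hl => ?_
    have hl' : l ≤ K := Nat.lt_succ_iff.1 (Finset.mem_range.1 hl)
    have e1 : ((K : ℤ) - (l : ℤ)) = ((K - l : ℕ) : ℤ) := by
      rw [Nat.cast_sub hl']
    have e2 : ((M : ℤ) + 2 + (l : ℤ)) = ((M + 2 + l : ℕ) : ℤ) := by push_cast; ring
    rw [e1, e2, cbinomZ_coe, cbinomZ_coe, cbinomZ_coe, cbinomZ_coe]
  · intro l hl
    simp only [Function.mem_support, ne_eq] at hl
    by_contra hmem
    apply hl
    have hl' : K < l := by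
      simp only [Finset.coe_range, Set.mem_Iio] at hmem
      omega
    have hneg : ((K : ℤ) - (l : ℤ)) < 0 := by omega
    rw [cbinomZ_neg _ hneg, cbinomZ_neg _ hneg]
    ring

lemma EEsum_symm (s : ℂ) (M K : ℕ) :
    EEsum s (M : ℤ) (K : ℤ) = EEsum (1 - s) (K : ℤ) (M : ℤ) := by
  set A : ℕ := M + K + 1 with hA
  set u : ℕ → ℂ := fun k =>
    (1 - s) * cbinom s k * cbinom (-s) (A + 1 - k)
      + s * cbinom (s - 1) k * cbinom (1 - s) (A + 1 - k) with hu
  set W : ℕ → ℂ := fun k => ((K : ℂ) + 1 - k) * u k with hW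
  have h0 : ∑ k ∈ Finset.range (A + 2), u k = 0 := by
    have v1 := cbinom_vandermonde (A + 1) s (-s)
    have v2 := cbinom_vandermonde (A + 1) (s - 1) (1 - s)
    have e1 : s + -s = 0 := by ring
    have e2 : s - 1 + (1 - s) = 0 := by ring
    rw [e1, cbinom_zero_succ] at v1
    rw [e2, cbinom_zero_succ] at v2
    calc ∑ k ∈ Finset.range (A + 2), u k
        = (1 - s) * ∑ k ∈ Finset.range (A + 2), cbinom s k * cbinom (-s) (A + 1 - k)
          + s * ∑ k ∈ Finset.range (A + 2), cbinom (s - 1) k * cbinom (1 - s) (A + 1 - k) := by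
          rw [Finset.mul_sum, Finset.mul_sum, ← Finset.sum_add_distrib]
          exact Finset.sum_congr rfl fun k _ => by simp only [hu]; ring
      _ = 0 := by rw [v1, v2]; ring
  have h1 : ∑ k ∈ Finset.range (A + 2), ((A : ℂ) + 1 - k) * u k = 0 := by
    have w1 := cbinom_vandermonde_wt s (-s) A
    have w2 := cbinom_vandermonde_wt (s - 1) (1 - s) A
    have e1 : s + -s - 1 = -1 := by ring
    have e2 : s - 1 + (1 - s) - 1 = -1 := by ring
    rw [e1] at w1
    rw [e2] at w2
    calc ∑ k ∈ Finset.range (A + 2), ((A : ℂ) + 1 - k) * u k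
        = (1 - s) * ∑ k ∈ Finset.range (A + 2), ((A : ℂ) + 1 - k) * (cbinom s k * cbinom (-s) (A + 1 - k))
          + s * ∑ k ∈ Finset.range (A + 2), ((A : ℂ) + 1 - k) * (cbinom (s - 1) k * cbinom (1 - s) (A + 1 - k)) := by
          rw [Finset.mul_sum, Finset.mul_sum, ← Finset.sum_add_distrib]
          exact Finset.sum_congr rfl fun k _ => by simp only [hu]; ring
      _ = 0 := by rw [w1, w2]; ring
  have hWsum : ∑ k ∈ Finset.range (A + 2), W k = 0 := by
    have hsplit : ∀ k ∈ Finset.range (A + 2),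
        W k = ((A : ℂ) + 1 - k) * u k - ((M : ℂ) + 1) * u k := by
      intro k _
      simp only [hW, hA]
      push_cast
      ring
    rw [Finset.sum_congr rfl hsplit, Finset.sum_sub_distrib, h1, ← Finset.mul_sum, h0]
    ring
  -- first part: sum over range (K+1) is EEsum s M K
  have hS1 : ∑ k ∈ Finset.range (K + 1), W k = EEsum s (M : ℤ) (K : ℤ) := by
    rw [EEsum_eq, ← Finset.sum_range_reflect (fun k => W k) (K + 1)]
    refine Finset.sum_congr rfl fun l hl => ?_
    have hl' : l ≤ K := Nat.lt_succ_iff.1 (Finset.mem_range.1 hl)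
    have hidx1 : K + 1 - 1 - l = K - l := by omega
    have hidx2 : A + 1 - (K - l) = M + 2 + l := by omega
    have hc : ((K : ℂ) + 1 - ((K - l : ℕ) : ℂ)) = (l : ℂ) + 1 := by
      push_cast [Nat.cast_sub hl']; ring
    simp only [hW, hu, hidx1, hidx2, hc]
  -- middle and last part
  have hS2 : ∑ k ∈ Finset.Ico (K + 1) (A + 2), W k = - EEsum (1 - s) (K : ℤ) (M : ℤ) := by
    rw [Finset.sum_Ico_eq_sum_range]
    have hcard : A + 2 - (K + 1) = M + 2 := by omega
    rw [hcard, Finset.sum_range_succ']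
    have hg0 : W (K + 1 + 0) = 0 := by
      simp only [hW]
      have : ((K : ℂ) + 1 - ((K + 1 + 0 : ℕ) : ℂ)) = 0 := by push_cast; ring
      rw [this, zero_mul]
    rw [hg0, add_zero, EEsum_eq]
    rw [← Finset.sum_neg_distrib]
    refine Finset.sum_congr rfl fun j hj => ?_
    have hj' : j ≤ M := Nat.lt_succ_iff.1 (Finset.mem_range.1 hj)
    have hidx1 : K + 1 + (j + 1) = K + 2 + j := by omega
    have hidx2 : A + 1 - (K + 2 + j) = M - j := by omega
    have hc : ((K : ℂ) + 1 - ((K + 2 + j : ℕ) : ℂ)) = -((j : ℂ) + 1) := by push_cast; ring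
    have e1 : (1 : ℂ) - (1 - s) = s := by ring
    have e2 : -(1 - s) = s - 1 := by ring
    have e3 : (1 - s) - 1 = -s := by ring
    simp only [hW, hu, hidx1, hidx2, hc, e1, e2, e3]
    ring
  have hunion : ∑ k ∈ Finset.range (K + 1), W k + ∑ k ∈ Finset.Ico (K + 1) (A + 2), W k
      = ∑ k ∈ Finset.range (A + 2), W k := by
    simp only [Finset.range_eq_Ico]
    exact Finset.sum_Ico_consecutive _ (m := 0) (n := K + 1) (k := A + 2) (by omega) (by omega)
  rw [hS1, hS2, hWsum] at hunion
  linear_combination hunion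

lemma EEsum_zero (M K : ℕ) : EEsum 0 (M : ℤ) (K : ℤ) = 0 := by
  rw [EEsum_eq]
  refine Finset.sum_eq_zero fun l _ => ?_
  have h2 : cbinom (-(0:ℂ)) (M + 2 + l) = 0 := by
    rw [neg_zero, show M + 2 + l = (M + 1 + l) + 1 from by omega]
    exact cbinom_zero_succ _
  rw [h2]
  ring

lemma EEsum_one (M K : ℕ) : EEsum 1 (M : ℤ) (K : ℤ) = 0 := by
  rw [EEsum_eq]
  refine Finset.sum_eq_zero fun l _ => ?_
  have h2 : cbinom ((1:ℂ) - 1) (M + 2 + l) = 0 := by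
    rw [sub_self, show M + 2 + l = (M + 1 + l) + 1 from by omega]
    exact cbinom_zero_succ _
  rw [h2]
  ring

lemma HeisForm.proj_shift {p : ℕ} (Hs : HeisForm p H) (r : ℤ) :
    ∀ q : ℤ, Hs.proj (r + q * p) = Hs.proj r := by
  intro q
  induction q using Int.induction_on with
  | zero => simp
  | succ q ih =>
    have : r + (q + 1) * p = (r + q * p) + p := by ring
    rw [this, Hs.proj_per, ih]
  | pred q ih =>
    have : (r + (-q - 1) * p) + p = r + (-q) * p := by ring
    have h2 := Hs.proj_per (r + (-q - 1) * p)
    rw [this] at h2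
    rw [← ih, ← h2]

lemma HeisForm.proj_congr {p : ℕ} (Hs : HeisForm p H) {r t : ℤ}
    (h : (p : ℤ) ∣ r - t) : Hs.proj r = Hs.proj t := by
  obtain ⟨q, hq⟩ := h
  have hr : r = t + q * p := by linear_combination hq
  rw [hr, Hs.proj_shift]

lemma HeisForm.bil_proj_proj {p : ℕ} (hp : 0 < p) (Hs : HeisForm p H)
    (r t : ℤ) (α β : H) (h : ¬ ((p : ℤ) ∣ r + t)) :
    Hs.bil (Hs.proj r α) (Hs.proj t β) = 0 := by
  have hω : Hs.ωp ≠ 0 := Hs.prim.ne_zero hp.ne'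
  have hiso := Hs.isom (Hs.proj r α) (Hs.proj t β)
  rw [Hs.proj_eig, Hs.proj_eig] at hiso
  simp only [map_smul, LinearMap.smul_apply, smul_eq_mul] at hiso
  have hne : Hs.ωp ^ (r + t) ≠ 1 := fun h1 => h ((Hs.prim.zpow_eq_one_iff_dvd _).1 h1)
  rw [zpow_add₀ hω] at hne
  have hfac : (Hs.ωp ^ r * Hs.ωp ^ t - 1) * Hs.bil (Hs.proj r α) (Hs.proj t β) = 0 := by
    linear_combination hiso
  rcases mul_eq_zero.1 hfac with h1 | h2
  · exact absurd (by linear_combination h1) hne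
  · exact h2

lemma HeisForm.bil_proj_right {p : ℕ} (hp : 0 < p) (Hs : HeisForm p H)
    (r : ℤ) (α β : H) :
    Hs.bil α (Hs.proj r β) = Hs.bil (Hs.proj (-r) α) (Hs.proj r β) := by
  conv_lhs => rw [← Hs.proj_sum α]
  rw [map_sum, LinearMap.sum_apply]
  set t₀ : ℕ := ((-r) % (p : ℤ)).toNat with ht₀
  have hmod0 : (0 : ℤ) ≤ (-r) % (p : ℤ) := Int.emod_nonneg _ (by exact_mod_cast hp.ne')
  have hmodlt : (-r) % (p : ℤ) < (p : ℤ) := Int.emod_lt_of_pos _ (by exact_mod_cast hp)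
  have ht₀cast : ((t₀ : ℤ)) = (-r) % (p : ℤ) := Int.toNat_of_nonneg hmod0
  have hmem : t₀ ∈ Finset.range p := by
    rw [Finset.mem_range]
    omega
  have hzero : ∀ t ∈ Finset.range p, t ≠ t₀ → Hs.bil (Hs.proj (t : ℤ) α) (Hs.proj r β) = 0 := by
    intro t ht hne
    apply Hs.bil_proj_proj hp
    intro hdvd
    apply hne
    have htlt : (t : ℤ) < (p : ℤ) := by exact_mod_cast Finset.mem_range.1 ht
    have hmodeq : (t : ℤ) % p = (-r) % p := by
      have hmd : (t : ℤ) ≡ -r [ZMOD (p : ℤ)] := Int.ModEq.symm ((Int.modEq_iff_dvd).2 (by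
        have he : (t : ℤ) - -r = (t : ℤ) + r := by ring
        rw [he]
        exact hdvd))
      exact hmd
    have hself : (t : ℤ) % p = (t : ℤ) := Int.emod_eq_of_lt (by positivity) htlt
    omega
  rw [Finset.sum_eq_single_of_mem t₀ hmem hzero]
  have hproj : Hs.proj (t₀ : ℤ) = Hs.proj (-r) := by
    apply Hs.proj_congr
    rw [ht₀cast, Int.emod_def]
    have he : -r - (p : ℤ) * ((-r) / p) - (-r) = (p : ℤ) * (-((-r) / p)) := by ring
    rw [he]
    exact Dvd.intro _ rfl
  rw [hproj]

lemma HeisForm.bil_swap {p : ℕ} (hp : 0 < p) (Hs : HeisForm p H) (r : ℤ) (α β : H) :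
    Hs.bil (Hs.proj r β) α = Hs.bil (Hs.proj (-r) α) β := by
  have h3 := Hs.bil_proj_right hp (-r) β α
  rw [neg_neg] at h3
  calc Hs.bil (Hs.proj r β) α
      = Hs.bil α (Hs.proj r β) := Hs.bil_symm _ _
    _ = Hs.bil (Hs.proj (-r) α) (Hs.proj r β) := Hs.bil_proj_right hp r α β
    _ = Hs.bil (Hs.proj r β) (Hs.proj (-r) α) := Hs.bil_symm _ _
    _ = Hs.bil β (Hs.proj (-r) α) := h3.symm
    _ = Hs.bil (Hs.proj (-r) α) β := Hs.bil_symm _ _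

/-- symmetry of the `g`-function, equation (5.8).  For `m, n ∈ ℤ₊`,
`g(α,m,β,n,x) = g(β,n,α,m,x)`, stated as the equality of the coefficients of each power
`x^c` of the two series (obtained from `gCoeff` by taking the residues
`Res_{x₀} Res_{x₂} x₀^{-m} x₂^{-n}`, i.e. the coefficients `a = m-1`, `b = n-1`). -/
theorem statement14 {H : Type} [AddCommGroup H] [Module ℂ H]
    (p : ℕ) (hp : 0 < p) (Hs : HeisForm p H)
    (α β : H) (m n : ℤ) (hm : 1 ≤ m) (hn : 1 ≤ n) :
    ∀ c : ℤ, gCoeff p Hs α β (m - 1) (n - 1) c = gCoeff p Hs β α (n - 1) (m - 1) c := by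
  intro c
  obtain ⟨M, hM⟩ : ∃ M : ℕ, (m - 1 : ℤ) = M := ⟨(m - 1).toNat, (Int.toNat_of_nonneg (by omega)).symm⟩
  obtain ⟨K, hK⟩ : ∃ K : ℕ, (n - 1 : ℤ) = K := ⟨(n - 1).toNat, (Int.toNat_of_nonneg (by omega)).symm⟩
  rw [gCoeff, gCoeff]
  by_cases hc : c = -(m - 1 + (n - 1) + 2)
  · rw [if_pos hc, if_pos (show c = -(n - 1 + (m - 1) + 2) by omega)]
    rw [hM, hK]
    have hp' : ((p : ℕ) : ℂ) ≠ 0 := Nat.cast_ne_zero.2 hp.ne'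
    have key : ∀ r ∈ Finset.Icc 1 p,
        Hs.bil (Hs.proj (r : ℤ) β) α * EEsum ((r : ℂ) / (p : ℂ)) (K : ℤ) (M : ℤ)
          = Hs.bil (Hs.proj ((p - r : ℕ) : ℤ) α) β
              * EEsum (((p - r : ℕ) : ℂ) / (p : ℂ)) (M : ℤ) (K : ℤ) := by
      intro r hr
      obtain ⟨hr1, hr2⟩ := Finset.mem_Icc.1 hr
      have hcastZ : (((p - r : ℕ)) : ℤ) = (p : ℤ) - r := by push_cast [Nat.cast_sub hr2]; ring
      have hcastC : (((p - r : ℕ)) : ℂ) = (p : ℂ) - r := by push_cast [Nat.cast_sub hr2]; ring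
      have hpr : Hs.proj ((p - r : ℕ) : ℤ) = Hs.proj (-(r : ℤ)) := by
        apply Hs.proj_congr
        rw [hcastZ]
        exact ⟨1, by ring⟩
      have hb : Hs.bil (Hs.proj (r : ℤ) β) α = Hs.bil (Hs.proj ((p - r : ℕ) : ℤ) α) β := by
        rw [Hs.bil_swap hp, hpr]
      have hs1 : (1 : ℂ) - ((p - r : ℕ) : ℂ) / (p : ℂ) = (r : ℂ) / (p : ℂ) := by
        rw [hcastC]
        field_simp
        ring
      have hE : EEsum ((r : ℂ) / (p : ℂ)) (K : ℤ) (M : ℤ)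
          = EEsum (((p - r : ℕ) : ℂ) / (p : ℂ)) (M : ℤ) (K : ℤ) := by
        rw [EEsum_symm (((p - r : ℕ) : ℂ) / (p : ℂ)) M K, hs1]
      rw [hb, hE]
    rw [Finset.sum_congr rfl key]
    have step2 : ∑ r ∈ Finset.Icc 1 p, Hs.bil (Hs.proj ((p - r : ℕ) : ℤ) α) β
            * EEsum (((p - r : ℕ) : ℂ) / (p : ℂ)) (M : ℤ) (K : ℤ)
        = ∑ t ∈ Finset.range p, Hs.bil (Hs.proj (t : ℤ) α) β
            * EEsum ((t : ℂ) / (p : ℂ)) (M : ℤ) (K : ℤ) := by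
      refine Finset.sum_bij' (fun r _ => p - r) (fun t _ => p - t) ?_ ?_ ?_ ?_ ?_
      · intro a ha
        have := Finset.mem_Icc.1 ha
        show p - a ∈ Finset.range p
        exact Finset.mem_range.2 (by omega)
      · intro a ha
        have := Finset.mem_range.1 ha
        show p - a ∈ Finset.Icc 1 p
        exact Finset.mem_Icc.2 (by omega)
      · intro a ha
        have := Finset.mem_Icc.1 ha
        show p - (p - a) = a
        omega
      · intro a ha
        have := Finset.mem_range.1 ha
        show p - (p - a) = a
        omega
      · intro a _
        rfl
    rw [step2]
    have hFp : Hs.bil (Hs.proj ((p : ℕ) : ℤ) α) β * EEsum (((p : ℕ) : ℂ) / (p : ℂ)) (M : ℤ) (K : ℤ) = 0 := by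
      rw [div_self hp', EEsum_one, mul_zero]
    have hF0 : Hs.bil (Hs.proj ((0 : ℕ) : ℤ) α) β * EEsum (((0 : ℕ) : ℂ) / (p : ℂ)) (M : ℤ) (K : ℤ) = 0 := by
      simp only [Nat.cast_zero, zero_div, EEsum_zero, mul_zero]
    have e2 : Finset.range (p + 1) = insert 0 (Finset.Icc 1 p) := by
      ext t
      simp only [Finset.mem_range, Finset.mem_insert, Finset.mem_Icc]
      omega
    have e3 : ∑ t ∈ Finset.range (p + 1), Hs.bil (Hs.proj (t : ℤ) α) β
            * EEsum ((t : ℂ) / (p : ℂ)) (M : ℤ) (K : ℤ)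
        = ∑ t ∈ Finset.range p, Hs.bil (Hs.proj (t : ℤ) α) β
            * EEsum ((t : ℂ) / (p : ℂ)) (M : ℤ) (K : ℤ) := by
      rw [Finset.sum_range_succ, hFp, add_zero]
    rw [← e3, e2, Finset.sum_insert (by simp)]
    rw [hF0, zero_add]
  · rw [if_neg hc, if_neg (show ¬ c = -(n - 1 + (m - 1) + 2) by omega)]
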